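/- arXiv:0909.4962 — 4 statements merged into one kernel-verified Lean document; each statement's English description precedes it below -/
import Mathlib

section
/- Suppose f, f' : ℝ≥0 → ℝ are continuous, both eventually zero (i.e., for each there exists L such that the function vanishes for all l ≥ L), and satisfy the same right-derivative condition: for every l ≥ 0 there exists δ > 0 and a real number a_l (the same a_l for both functions) with f(l') = f(l) + a_l(l'-l) and f'(l') = f'(l) + a_l(l'-l) for all l' ∈ [l, l+δ]. Then f = f' on [0, ∞). -/
/-- Two continuous, eventually-zero functions on `[0,∞)` that are locally affine to the
right with the same slopes are equal. -/
theorem eq_of_same_right_slopes (f f' : ℝ → ℝ)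
    (hcf : ContinuousOn f (Set.Ici (0 : ℝ)))
    (hcf' : ContinuousOn f' (Set.Ici (0 : ℝ)))
    (hzf : ∃ L : ℝ, ∀ l, L ≤ l → f l = 0)
    (hzf' : ∃ L : ℝ, ∀ l, L ≤ l → f' l = 0)
    (hslope : ∀ l : ℝ, 0 ≤ l → ∃ δ > 0, ∃ a : ℝ,
      ∀ l' ∈ Set.Icc l (l + δ),
        f l' = f l + a * (l' - l) ∧ f' l' = f' l + a * (l' - l)) :
    ∀ l : ℝ, 0 ≤ l → f l = f' l := by
  set g : ℝ → ℝ := fun x => f x - f' x with hg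
  have hgc : ContinuousOn g (Set.Ici (0 : ℝ)) := hcf.sub hcf'
  have hloc : ∀ x : ℝ, 0 ≤ x → ∃ δ > 0, ∀ y ∈ Set.Icc x (x + δ), g y = g x := by
    intro x hx
    obtain ⟨δ, hδ, a, ha⟩ := hslope x hx
    exact ⟨δ, hδ, fun y hy => by have := ha y hy; simp [hg, this.1, this.2]⟩
  -- g is constant on [l, ∞) for l ≥ 0
  have hconst : ∀ l : ℝ, 0 ≤ l → ∀ m : ℝ, l ≤ m → g m = g l := by
    intro l hl m hlm
    set S : Set ℝ := Set.Icc l m ∩ g ⁻¹' {g l} with hS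
    have hne : S.Nonempty := ⟨l, ⟨le_refl l, hlm⟩, rfl⟩
    have hbdd : BddAbove S := ⟨m, fun x hx => hx.1.2⟩
    have hsub : Set.Icc l m ⊆ Set.Ici (0 : ℝ) := fun x hx => le_trans hl hx.1
    have hclosed : IsClosed S :=
      (hgc.mono hsub).preimage_isClosed_of_isClosed isClosed_Icc isClosed_singleton
    set c := sSup S with hc
    have hcS : c ∈ S := hclosed.csSup_mem hne hbdd
    have hcm : c ≤ m := hcS.1.2
    have hlc : l ≤ c := hcS.1.1
    by_cases hcm' : c = m
    · have : g m = g l := by rw [← hcm']; exact hcS.2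
      exact this
    · exfalso
      have hclt : c < m := lt_of_le_of_ne hcm hcm'
      obtain ⟨δ, hδ, hδc⟩ := hloc c (le_trans hl hlc)
      set y := min (c + δ) m with hy
      have hyc : c < y := lt_min (by linarith) hclt
      have hymem : y ∈ Set.Icc c (c + δ) := ⟨le_of_lt hyc, min_le_left _ _⟩
      have hyS : y ∈ S := ⟨⟨le_trans hlc hyc.le, min_le_right _ _⟩,
        by rw [Set.mem_preimage, Set.mem_singleton_iff, hδc y hymem]; exact hcS.2⟩
      exact absurd (le_csSup hbdd hyS) (not_le.mpr hyc)
  intro l hl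
  obtain ⟨L1, hL1⟩ := hzf
  obtain ⟨L2, hL2⟩ := hzf'
  set M := max l (max L1 L2) with hM
  have h1 : g M = g l := hconst l hl M (le_max_left _ _)
  have h2 : g M = 0 := by
    have : f M = 0 := hL1 M (le_trans (le_max_left _ _) (le_max_right _ _))
    have : f' M = 0 := hL2 M (le_trans (le_max_right _ _) (le_max_right _ _))
    simp [hg, *]
  have : g l = 0 := by rw [← h1, h2]
  simpa [hg, sub_eq_zero] using this
end

section
/- Let n ≥ 1. Among all sequences (y₀,…,y_n) of natural numbers with y₀ = 0, fixed final value y_n = k (where n - k is even and 0 ≤ k ≤ n), and |y_{i+1} - y_i| = 1 for all i, the sum Σ y_i is maximized exactly by the unique valley-free (standard) sequence. -/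
private lemma step_ub (n : ℕ) (z : ℕ → ℕ) (h0 : z 0 = 0)
    (hstep : ∀ i < n, z (i + 1) = z i + 1 ∨ z i = z (i + 1) + 1) :
    ∀ i ≤ n, z i ≤ i := by
  intro i hi
  induction i with
  | zero => omega
  | succ i ih =>
    have h := hstep i (by omega)
    have := ih (by omega)
    omega

private lemma step_lb (n : ℕ) (z : ℕ → ℕ)
    (hstep : ∀ i < n, z (i + 1) = z i + 1 ∨ z i = z (i + 1) + 1) :
    ∀ d i, i + d ≤ n → z i ≤ z (i + d) + d := by
  intro d
  induction d with
  | zero => intro i _; simp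
  | succ d ih =>
    intro i h
    have h1 := hstep i (by omega)
    have h2 := ih (i + 1) (by omega)
    have e : i + 1 + d = i + (d + 1) := by omega
    rw [e] at h2
    omega

private lemma step_lb2 (n : ℕ) (z : ℕ → ℕ)
    (hstep : ∀ i < n, z (i + 1) = z i + 1 ∨ z i = z (i + 1) + 1) :
    ∀ d i, i + d ≤ n → z (i + d) ≤ z i + d := by
  intro d
  induction d with
  | zero => intro i _; simp
  | succ d ih =>
    intro i h
    have h1 := hstep i (by omega)
    have h2 := ih (i + 1) (by omega)
    have e : i + 1 + d = i + (d + 1) := by omega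
    rw [e] at h2
    omega

/-- Among all ±1-step sequences of natural numbers starting at 0 with fixed length `n`
and fixed endpoint, the sum of the entries is maximized exactly by the valley-free
(standard) sequence. -/
theorem sum_maximized_iff_valley_free (n : ℕ) (hn : 1 ≤ n) (y : ℕ → ℕ)
    (h0 : y 0 = 0)
    (hstep : ∀ i < n, y (i + 1) = y i + 1 ∨ y i = y (i + 1) + 1) :
    (¬ ∃ j, 0 < j ∧ j < n ∧ y j < y (j - 1) ∧ y j < y (j + 1)) ↔
    (∀ z : ℕ → ℕ, z 0 = 0 → z n = y n →
      (∀ i < n, z (i + 1) = z i + 1 ∨ z i = z (i + 1) + 1) →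
      (∑ i ∈ Finset.range (n + 1), z i) ≤ ∑ i ∈ Finset.range (n + 1), y i) := by
  constructor
  · intro hnoval
    -- the last index where y i = i
    set m := Nat.findGreatest (fun i => y i = i) n with hmdef
    have hm_le : m ≤ n := Nat.findGreatest_le n
    have hm : y m = m :=
      Nat.findGreatest_spec (P := fun i => y i = i) (Nat.zero_le n) h0
    -- after m, y strictly decreases
    have hdec : ∀ d, m + d < n → y (m + d + 1) + 1 = y (m + d) := by
      intro d
      induction d with
      | zero =>
        intro hd
        have h := hstep m (by omega)
        have hne : ¬ (y (m + 1) = m + 1) :=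
          Nat.findGreatest_is_greatest (P := fun i => y i = i) (n := n)
            (k := m + 1) (by omega) (by omega)
        simp only [Nat.add_zero]
        omega
      | succ d ih =>
        intro hd
        have e : m + (d + 1) = m + d + 1 := by omega
        rw [e]
        have hprev := ih (by omega)
        have h := hstep (m + d + 1) (by omega)
        rcases h with h | h
        · exfalso
          apply hnoval
          refine ⟨m + d + 1, by omega, by omega, ?_, by omega⟩
          have e2 : m + d + 1 - 1 = m + d := by omega
          rw [e2]
          omega
        · omega
    -- hence y (m + d) = m - d
    have hval : ∀ d, m + d ≤ n → y (m + d) + d = m := by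
      intro d
      induction d with
      | zero => intro _; simpa using hm
      | succ d ih =>
        intro hd
        have h1 := ih (by omega)
        have h2 := hdec d (by omega)
        have e : m + (d + 1) = m + d + 1 := by omega
        rw [e]
        omega
    intro z hz0 hzn hzstep
    apply Finset.sum_le_sum
    intro i hi
    have hi' : i ≤ n := by
      have := Finset.mem_range.mp hi; omega
    have hzub := step_ub n z hz0 hzstep i hi'
    have hzlb := step_lb n z hzstep (n - i) i (by omega)
    have e : i + (n - i) = n := by omega
    rw [e] at hzlb
    by_cases hcase : i ≤ m
    · have hy := step_lb2 n y hstep (m - i) i (by omega)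
      have e2 : i + (m - i) = m := by omega
      rw [e2] at hy
      omega
    · have hvi := hval (i - m) (by omega)
      have e3 : m + (i - m) = i := by omega
      rw [e3] at hvi
      have hvn := hval (n - m) (by omega)
      have e4 : m + (n - m) = n := by omega
      rw [e4] at hvn
      omega
  · intro hmax hval
    obtain ⟨j, hj0, hjn, hleft, hright⟩ := hval
    have hstepj : y (j - 1 + 1) = y (j - 1) + 1 ∨ y (j - 1) = y (j - 1 + 1) + 1 :=
      hstep (j - 1) (by omega)
    have ej : j - 1 + 1 = j := by omega
    rw [ej] at hstepj
    have hL : y (j - 1) = y j + 1 := by omega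
    have hstepj2 := hstep j (by omega)
    have hR : y (j + 1) = y j + 1 := by omega
    set z : ℕ → ℕ := fun i => if i = j then y j + 2 else y i with hzdef
    have hz : ∀ i, z i = y i + (if i = j then 2 else 0) := by
      intro i
      simp only [hzdef]
      split <;> simp_all
    have hsum : (∑ i ∈ Finset.range (n + 1), z i)
        = (∑ i ∈ Finset.range (n + 1), y i) + 2 := by
      simp only [hz]
      rw [Finset.sum_add_distrib,
        Finset.sum_ite_eq' (Finset.range (n + 1)) j (fun _ => 2),
        if_pos (Finset.mem_range.mpr (by omega : j < n + 1))]
    have hz0 : z 0 = 0 := by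
      rw [hz 0, if_neg (by omega), h0]
    have hzn : z n = y n := by
      rw [hz n, if_neg (by omega)]
      omega
    have hzstep : ∀ i < n, z (i + 1) = z i + 1 ∨ z i = z (i + 1) + 1 := by
      intro i hi
      by_cases h1 : i + 1 = j
      · left
        rw [hz (i + 1), hz i, if_pos h1, if_neg (by omega)]
        have : i = j - 1 := by omega
        rw [this, ej]
        omega
      · by_cases h2 : i = j
        · right
          rw [hz (i + 1), hz i, if_pos h2, if_neg h1, h2]
          omega
        · rcases hstep i hi with h | h
          · left; rw [hz (i + 1), hz i, if_neg h1, if_neg h2]; omega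
          · right; rw [hz (i + 1), hz i, if_neg h1, if_neg h2]; omega
    have hle := hmax z hz0 hzn hzstep
    omega
end

section
/- Any iteration of the valley-filling operation (replacing a valley entry y_j by y_j + 2) on sequences (y₀,…,y_n) of natural numbers with y₀ = 0, fixed y_n, and consecutive differences ±1 terminates after finitely many steps, ending at the unique valley-free sequence. -/
/-- A ±1-step sequence of naturals starting at `0` of length `n`. -/
def IsStepSeq (n : ℕ) (y : ℕ → ℕ) : Prop :=
  y 0 = 0 ∧ ∀ i < n, y (i + 1) = y i + 1 ∨ y i = y (i + 1) + 1

/-- One valley-filling step: replace a valley entry `y j` by `y j + 2`. -/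
def ValleyStep (n : ℕ) (y y' : ℕ → ℕ) : Prop :=
  ∃ j, 0 < j ∧ j < n ∧ y (j - 1) = y j + 1 ∧ y (j + 1) = y j + 1 ∧
    y' = Function.update y j (y j + 2)

private lemma vs_update {n : ℕ} {y y' : ℕ → ℕ} (h : ValleyStep n y y') :
    ∃ j, 0 < j ∧ j < n ∧ y (j - 1) = y j + 1 ∧ y (j + 1) = y j + 1 ∧
      y' j = y j + 2 ∧ ∀ i, i ≠ j → y' i = y i := by
  obtain ⟨j, h1, h2, h3, h4, h5⟩ := h
  exact ⟨j, h1, h2, h3, h4, by rw [h5]; simp,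
    fun i hi => by rw [h5]; simp [Function.update_of_ne hi]⟩

private lemma step_isStep {n : ℕ} {y y' : ℕ → ℕ} (hy : IsStepSeq n y)
    (h : ValleyStep n y y') : IsStepSeq n y' := by
  obtain ⟨j, hj0, hjn, hd, hu, hj, hne⟩ := vs_update h
  obtain ⟨h0, hs⟩ := hy
  refine ⟨by rw [hne 0 (by omega), h0], fun i hi => ?_⟩
  rcases eq_or_ne i j with rfl | hij
  · right; rw [hj, hne (i + 1) (by omega), hu]
  · rcases eq_or_ne (i + 1) j with hij1 | hij1
    · left
      have hij' : i = j - 1 := by omega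
      rw [hne i hij, hij1, hj, hij', hd]
    · rw [hne i hij, hne (i + 1) hij1]; exact hs i hi

private lemma step_sum {n : ℕ} {y y' : ℕ → ℕ} (h : ValleyStep n y y') :
    ∑ i ∈ Finset.range (n + 1), y' i = (∑ i ∈ Finset.range (n + 1), y i) + 2 := by
  obtain ⟨j, hj0, hjn, hd, hu, hj, hne⟩ := vs_update h
  have hmem : j ∈ Finset.range (n + 1) := by simp; omega
  rw [← Finset.add_sum_erase _ y' hmem, ← Finset.add_sum_erase _ y hmem]
  have he : ∑ i ∈ (Finset.range (n + 1)).erase j, y' i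
      = ∑ i ∈ (Finset.range (n + 1)).erase j, y i :=
    Finset.sum_congr rfl (fun i hi => hne i (Finset.ne_of_mem_erase hi))
  omega

private lemma step_close {n : ℕ} {y : ℕ → ℕ} (hy : IsStepSeq n y) :
    ∀ a b, a ≤ b → b ≤ n → y b ≤ y a + (b - a) ∧ y a ≤ y b + (b - a) := by
  intro a b hab
  induction b, hab using Nat.le_induction with
  | base => simp
  | succ b hb ih =>
    intro hbn
    have h1 := ih (by omega)
    have h2 := hy.2 b (by omega)
    omega

private lemma sum_bound {n : ℕ} {y : ℕ → ℕ} (hy : IsStepSeq n y) :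
    ∑ i ∈ Finset.range (n + 1), y i ≤ ∑ i ∈ Finset.range (n + 1), i :=
  Finset.sum_le_sum (fun i hi => by
    have h0 := hy.1
    have := (step_close hy 0 i (by omega) (by simp at hi; omega)).1
    omega)

private lemma all_down {n : ℕ} {y : ℕ → ℕ} (hy : IsStepSeq n y)
    (hnv : ¬ ∃ j, 0 < j ∧ j < n ∧ y (j - 1) = y j + 1 ∧ y (j + 1) = y j + 1)
    {k : ℕ} (hk0 : 0 < k) (hdown : y (k - 1) = y k + 1) :
    ∀ j, k ≤ j → j ≤ n → y j + (j - k) = y k ∧ y (j - 1) = y j + 1 := by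
  intro j hkj
  induction j, hkj using Nat.le_induction with
  | base => intro _; exact ⟨by omega, hdown⟩
  | succ j hj ih =>
    intro hjn
    obtain ⟨ihs, ihd⟩ := ih (by omega)
    have hjlt : j < n := by omega
    have hnoval : ¬ (y (j + 1) = y j + 1) := fun hu => hnv ⟨j, by omega, hjlt, ihd, hu⟩
    have hst := hy.2 j hjlt
    have hdn : y j = y (j + 1) + 1 := by tauto
    exact ⟨by omega, by simpa using hdn⟩

private lemma normal_form {n : ℕ} {y : ℕ → ℕ} (hy : IsStepSeq n y)
    (hnv : ¬ ∃ j, 0 < j ∧ j < n ∧ y (j - 1) = y j + 1 ∧ y (j + 1) = y j + 1) :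
    ∀ i ≤ n, y i = min i (y n + (n - i)) := by
  intro i hin
  have h0 := hy.1
  have hle : y i ≤ i := by have := (step_close hy 0 i (by omega) hin).1; omega
  have hcl := step_close hy i n hin le_rfl
  by_cases hk : ∃ k, 0 < k ∧ k ≤ i ∧ y (k - 1) = y k + 1
  · obtain ⟨k, hk0, hki, hkd⟩ := hk
    have hi' := (all_down hy hnv hk0 hkd i hki hin).1
    have hn' := (all_down hy hnv hk0 hkd n (by omega) le_rfl).1
    omega
  · push_neg at hk
    have hup : ∀ j, j ≤ i → y j = j := by
      intro j
      induction j with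
      | zero => intro _; exact h0
      | succ j ih =>
        intro hj
        have hyj := ih (by omega)
        have hst := hy.2 j (by omega)
        have hnd := hk (j + 1) (by omega) (by omega)
        simp only [Nat.add_sub_cancel] at hnd
        omega
    have hyi := hup i le_rfl
    omega

private lemma rtg_preserve {n : ℕ} {y z : ℕ → ℕ}
    (h : Relation.ReflTransGen (ValleyStep n) y z) (hy : IsStepSeq n y) :
    IsStepSeq n z ∧ z n = y n := by
  induction h with
  | refl => exact ⟨hy, rfl⟩
  | tail hbc hstep ih =>
    obtain ⟨hb, hbn⟩ := ih
    obtain ⟨j, hj0, hjn, hd, hu, hj, hne⟩ := vs_update hstep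
    exact ⟨step_isStep hb hstep, by rw [hne n (by omega), hbn]⟩

private lemma exists_nf {n : ℕ} :
    ∀ m (y : ℕ → ℕ), IsStepSeq n y →
      (∑ i ∈ Finset.range (n + 1), i) - (∑ i ∈ Finset.range (n + 1), y i) ≤ m →
      ∃ z, Relation.ReflTransGen (ValleyStep n) y z ∧ IsStepSeq n z ∧ z n = y n ∧
        ¬ ∃ j, 0 < j ∧ j < n ∧ z (j - 1) = z j + 1 ∧ z (j + 1) = z j + 1 := by
  intro m
  induction m with
  | zero =>
    intro y hy hm
    by_cases hv : ∃ j, 0 < j ∧ j < n ∧ y (j - 1) = y j + 1 ∧ y (j + 1) = y j + 1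
    · exfalso
      obtain ⟨j, hj0, hjn, hd, hu⟩ := hv
      have hvs : ValleyStep n y (Function.update y j (y j + 2)) :=
        ⟨j, hj0, hjn, hd, hu, rfl⟩
      have h1 := step_sum hvs
      have h2 := sum_bound (step_isStep hy hvs)
      omega
    · exact ⟨y, .refl, hy, rfl, hv⟩
  | succ m ih =>
    intro y hy hm
    by_cases hv : ∃ j, 0 < j ∧ j < n ∧ y (j - 1) = y j + 1 ∧ y (j + 1) = y j + 1
    · obtain ⟨j, hj0, hjn, hd, hu⟩ := hv
      have hvs : ValleyStep n y (Function.update y j (y j + 2)) :=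
        ⟨j, hj0, hjn, hd, hu, rfl⟩
      have hy' := step_isStep hy hvs
      have h1 := step_sum hvs
      obtain ⟨z, hz1, hz2, hz3, hz4⟩ := ih _ hy' (by have := sum_bound hy'; omega)
      refine ⟨z, Relation.ReflTransGen.head hvs hz1, hz2, ?_, hz4⟩
      rw [hz3, Function.update_of_ne (by omega)]
    · exact ⟨y, .refl, hy, rfl, hv⟩

/-- Iterating valley-filling always terminates (there is no infinite chain of
valley-filling steps), and every sequence reaches, after finitely many steps, the
unique valley-free sequence with the same endpoints. -/
theorem valley_filling_terminates (n : ℕ) (hn : 1 ≤ n) :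
    (¬ ∃ F : ℕ → (ℕ → ℕ), IsStepSeq n (F 0) ∧
        ∀ k : ℕ, ValleyStep n (F k) (F (k + 1))) ∧
    (∀ y : ℕ → ℕ, IsStepSeq n y →
      ∃ z : ℕ → ℕ, Relation.ReflTransGen (ValleyStep n) y z ∧
        (¬ ∃ j, 0 < j ∧ j < n ∧ z (j - 1) = z j + 1 ∧ z (j + 1) = z j + 1) ∧
        ∀ z' : ℕ → ℕ, Relation.ReflTransGen (ValleyStep n) y z' →
          (¬ ∃ j, 0 < j ∧ j < n ∧ z' (j - 1) = z' j + 1 ∧ z' (j + 1) = z' j + 1) →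
          ∀ i ≤ n, z' i = z i) := by
  constructor
  · rintro ⟨F, hF0, hFs⟩
    have hstep : ∀ k, IsStepSeq n (F k) := by
      intro k
      induction k with
      | zero => exact hF0
      | succ k ih => exact step_isStep ih (hFs k)
    have hsum : ∀ k, ∑ i ∈ Finset.range (n + 1), F k i
        = (∑ i ∈ Finset.range (n + 1), F 0 i) + 2 * k := by
      intro k
      induction k with
      | zero => simp
      | succ k ih => have := step_sum (hFs k); omega
    have hbd := sum_bound (hstep ((∑ i ∈ Finset.range (n + 1), i) + 1))
    have := hsum ((∑ i ∈ Finset.range (n + 1), i) + 1)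
    omega
  · intro y hy
    obtain ⟨z, hz1, hz2, hz3, hz4⟩ := exists_nf _ y hy le_rfl
    refine ⟨z, hz1, hz4, ?_⟩
    intro z' hz' hnv' i hi
    obtain ⟨hz'2, hz'n⟩ := rtg_preserve hz' hy
    have e1 := normal_form hz'2 hnv' i hi
    have e2 := normal_form hz2 hz4 i hi
    rw [e1, e2, hz'n, hz3]
end

section
/- For every integer n ≥ 3 and every j with 2 ≤ j ≤ n-1, and natural number m ≥ 0, the four case-identities (i)–(iv) imply: the value Σ_{i=1}^{n-1} sin(iπ/n)·c_i is unchanged when the local slope contributions (c_{j-1}, c_j, c_{j+1}) determined by a ±1-step sequence with a valley at j are replaced by those of the sequence with y_j replaced by y_j + 2, where the contribution at index i is ε_i·sin(y_i π/n)/sin(π/n) with ε_i ∈ {-1, 0, 1} determined by: ε_i = -1 if y_{i-1} = y_{i+1} = y_i - 1, ε_i = +1 if y_{i-1} = y_{i+1} = y_i + 1, and ε_i = 0 if y_{i-1} ≠ y_{i+1}. -/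
open Real

/-- The local slope contribution sign `εᵢ` of a ±1-step sequence at index `i`:
`-1` if both neighbours are strictly smaller, `+1` if both neighbours are strictly
larger, `0` if the two neighbours differ. -/
noncomputable def slopeSign (y : ℕ → ℕ) (i : ℕ) : ℝ :=
  if y (i - 1) = y (i + 1) ∧ y i = y (i - 1) + 1 then -1
  else if y (i - 1) = y (i + 1) ∧ y (i - 1) = y i + 1 then 1
  else 0

/-- The total slope `S(y) = Σ_{i=1}^{n-1} sin(iπ/n)·εᵢ·sin(yᵢπ/n)/sin(π/n)`. -/
noncomputable def totalSlope (n : ℕ) (y : ℕ → ℕ) : ℝ :=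
  ∑ i ∈ Finset.Icc 1 (n - 1),
    sin (i * π / n) * slopeSign y i * sin (y i * π / n) / sin (π / n)

/-- Filling a valley of a ±1-step sequence does not change the total slope. -/
theorem totalSlope_valley_fill (n : ℕ) (hn : 3 ≤ n) (y : ℕ → ℕ)
    (h0 : y 0 = 0)
    (hstep : ∀ i < n, y (i + 1) = y i + 1 ∨ y i = y (i + 1) + 1)
    (j : ℕ) (hj2 : 2 ≤ j) (hjn : j ≤ n - 1)
    (hvl : y (j - 1) = y j + 1) (hvr : y (j + 1) = y j + 1) :
    totalSlope n y = totalSlope n (Function.update y j (y j + 2)) := by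
  classical
  set y' := Function.update y j (y j + 2) with hy'
  set a := y j with ha
  set f : (ℕ → ℕ) → ℕ → ℝ := fun z i =>
    sin (i * π / n) * slopeSign z i * sin (z i * π / n) / sin (π / n) with hf
  have hn0 : (n : ℝ) ≠ 0 := by positivity
  have hy'j : y' j = a + 2 := by simp [hy']
  have hy'ne : ∀ k, k ≠ j → y' k = y k := fun k hk => Function.update_of_ne hk _ _
  -- generic index arithmetic
  have ejm1 : j - 1 + 1 = j := by omega
  have ejm2 : j - 1 - 1 = j - 2 := by omega
  have ejm3 : j - 2 + 1 = j - 1 := by omega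
  -- values of slopeSign at j
  have hsj : slopeSign y j = 1 := by
    rw [slopeSign, if_neg (by omega), if_pos ⟨by omega, by omega⟩]
  have hsj' : slopeSign y' j = -1 := by
    rw [slopeSign, hy'ne (j-1) (by omega), hy'ne (j+1) (by omega), hy'j,
      if_pos ⟨by omega, by omega⟩]
  -- value of the difference at j - 1
  have hgjm : f y' (j-1) - f y (j-1) =
      sin ((j-1 : ℕ) * π / n) * sin ((a+1 : ℕ) * π / n) / sin (π / n) := by
    have hv2 : y' (j-2) = y (j-2) := hy'ne _ (by omega)
    have hv1 : y' (j-1) = y (j-1) := hy'ne _ (by omega)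
    rcases hstep (j-2) (by omega) with hA | hB
    · rw [ejm3] at hA
      have hs1 : slopeSign y (j-1) = -1 := by
        rw [slopeSign, ejm2, ejm1, if_pos ⟨by omega, by omega⟩]
      have hs2 : slopeSign y' (j-1) = 0 := by
        rw [slopeSign, ejm2, ejm1, hv2, hv1, hy'j, if_neg (by omega),
          if_neg (by omega)]
      simp only [hf, hs1, hs2, hv1, hvl]
      ring
    · rw [ejm3] at hB
      have hs1 : slopeSign y (j-1) = 0 := by
        rw [slopeSign, ejm2, ejm1, if_neg (by omega), if_neg (by omega)]
      have hs2 : slopeSign y' (j-1) = 1 := by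
        rw [slopeSign, ejm2, ejm1, hv2, hv1, hy'j, if_neg (by omega),
          if_pos ⟨by omega, by omega⟩]
      simp only [hf, hs1, hs2, hv1, hvl]
      ring
  -- value of the difference at j
  have hgj : f y' j - f y j =
      -(sin ((j : ℕ) * π / n) * (sin ((a+2 : ℕ) * π / n) + sin ((a : ℕ) * π / n))
        / sin (π / n)) := by
    simp only [hf, hsj, hsj', hy'j, ← ha]
    ring
  -- value of the difference at j + 1
  have hgjp : f y' (j+1) - f y (j+1) =
      sin ((j+1 : ℕ) * π / n) * sin ((a+1 : ℕ) * π / n) / sin (π / n) := by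
    have hv2 : y' (j+2) = y (j+2) := hy'ne _ (by omega)
    have hv1 : y' (j+1) = y (j+1) := hy'ne _ (by omega)
    have e1 : j + 1 - 1 = j := by omega
    by_cases hcase : j + 1 < n
    · rcases hstep (j+1) hcase with hA | hB
      · have hs1 : slopeSign y (j+1) = 0 := by
          rw [slopeSign, e1, if_neg (by omega), if_neg (by omega)]
        have hs2 : slopeSign y' (j+1) = 1 := by
          rw [slopeSign, e1, hy'j, hv1, hy'ne (j+1+1) (by omega),
            if_neg (by omega), if_pos ⟨by omega, by omega⟩]
        simp only [hf, hs1, hs2, hv1, hvr]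
        ring
      · have hs1 : slopeSign y (j+1) = -1 := by
          rw [slopeSign, e1, if_pos ⟨by omega, by omega⟩]
        have hs2 : slopeSign y' (j+1) = 0 := by
          rw [slopeSign, e1, hy'j, hv1, hy'ne (j+1+1) (by omega),
            if_neg (by omega), if_neg (by omega)]
        simp only [hf, hs1, hs2, hv1, hvr]
        ring
    · -- j + 1 = n : both sides vanish since sin(nπ/n) = 0
      have hjn' : j + 1 = n := by omega
      have hsin0 : sin ((j+1 : ℕ) * π / n) = 0 := by
        rw [hjn', show (n:ℝ) * π / n = π from by field_simp]
        exact Real.sin_pi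
      simp only [hf, hsin0, hv1]
      ring
  -- the difference vanishes outside {j-1, j, j+1}
  have hzero : ∀ i ∈ Finset.Icc 1 n, i ∉ ({j-1, j, j+1} : Finset ℕ) →
      f y' i - f y i = 0 := by
    intro i hi hnot
    simp only [Finset.mem_Icc] at hi
    simp only [Finset.mem_insert, Finset.mem_singleton, not_or] at hnot
    obtain ⟨h1, h2, h3⟩ := hnot
    have e1 : y' (i-1) = y (i-1) := hy'ne _ (by omega)
    have e2 : y' i = y i := hy'ne _ (by omega)
    have e3 : y' (i+1) = y (i+1) := hy'ne _ (by omega)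
    have : slopeSign y' i = slopeSign y i := by rw [slopeSign, slopeSign, e1, e2, e3]
    simp only [hf, this, e2]
    ring
  have hsubset : ({j-1, j, j+1} : Finset ℕ) ⊆ Finset.Icc 1 n := by
    intro x hx
    simp only [Finset.mem_insert, Finset.mem_singleton] at hx
    simp only [Finset.mem_Icc]
    omega
  have hgn : f y' n - f y n = 0 := by
    have hsin0 : sin ((n : ℕ) * π / n) = 0 := by
      rw [show ((n:ℕ):ℝ) * π / n = π from by field_simp]
      exact Real.sin_pi
    simp only [hf, hsin0]
    ring
  have key : ∑ i ∈ Finset.Icc 1 (n-1), (f y' i - f y i) = 0 := by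
    have hext : ∑ i ∈ Finset.Icc 1 (n-1), (f y' i - f y i)
        = ∑ i ∈ Finset.Icc 1 n, (f y' i - f y i) := by
      apply Finset.sum_subset (Finset.Icc_subset_Icc_right (by omega))
      intro x hx hx'
      simp only [Finset.mem_Icc] at hx hx'
      have : x = n := by omega
      rw [this]; exact hgn
    rw [hext, ← Finset.sum_subset hsubset hzero]
    rw [show ({j-1, j, j+1} : Finset ℕ) = insert (j-1) (insert j {j+1}) from rfl,
      Finset.sum_insert (by simp only [Finset.mem_insert, Finset.mem_singleton]; omega), Finset.sum_insert (by simp only [Finset.mem_singleton]; omega),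
      Finset.sum_singleton, hgjm, hgj, hgjp]
    have hc1 : ((j - 1 : ℕ) : ℝ) = (j : ℝ) - 1 := by
      push_cast [Nat.cast_sub (show 1 ≤ j by omega)]; ring
    push_cast [hc1]
    rw [show ((j:ℝ) - 1) * π / n = (j:ℝ) * π / n - π / n from by ring,
      show ((j:ℝ) + 1) * π / n = (j:ℝ) * π / n + π / n from by ring,
      show ((a:ℝ) + 2) * π / n = ((a:ℝ)+1) * π / n + π / n from by ring,
      show (a:ℝ) * π / n = ((a:ℝ)+1) * π / n - π / n from by ring]
    simp only [Real.sin_add, Real.sin_sub]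
    have hs : sin (π / n) ≠ 0 := by
      have h1 : (0:ℝ) < π / n := by positivity
      have h2 : π / n < π := by
        apply div_lt_self Real.pi_pos
        exact_mod_cast by omega
      exact ne_of_gt (Real.sin_pos_of_pos_of_lt_pi h1 h2)
    field_simp
    ring
  have : totalSlope n y' - totalSlope n y = 0 := by
    rw [totalSlope, totalSlope, ← Finset.sum_sub_distrib]
    exact key
  linarith
end
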